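/- Let 0 < γ < 1 and let μ be a Borel probability measure on [0,1] such that c ↦ ∫_{[0,1]} |x−c|^γ dμ(x) is constant for c ∈ [0,1]. Then μ maximizes E_{X,X' iid ∼ ν} |X−X'|^γ = ∫∫ |x−x'|^γ dν(x) dν(x') over all Borel probability measures ν on [0,1]. -/

import Mathlib

open MeasureTheory Set
open scoped ENNReal NNReal

namespace Stmt16Aux

noncomputable section

lemma two_mul_le (a b : ℝ≥0∞) : a * b + a * b ≤ a * a + b * b := by
  rcases eq_or_ne a 0 with rfl | ha0
  · simp
  rcases eq_or_ne b 0 with rfl | hb0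
  · simp
  rcases eq_or_ne a ∞ with rfl | ha
  · simp [ENNReal.top_mul ha0]
  rcases eq_or_ne b ∞ with rfl | hb
  · simp [ENNReal.top_mul hb0, ENNReal.mul_top hb0]
  lift a to ℝ≥0 using ha
  lift b to ℝ≥0 using hb
  have h : (a : ℝ) * b + a * b ≤ a * a + b * b := by nlinarith [sq_nonneg ((a : ℝ) - b)]
  exact_mod_cast h

lemma lint_exp_Ioo {s m : ℝ} (hs : 0 < s) (hm : 0 ≤ m) :
    ∫⁻ t in Ioo 0 m, ENNReal.ofReal (2 * s * Real.exp (2 * s * t)) =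
      ENNReal.ofReal (Real.exp (2 * s * m) - 1) := by
  rcases eq_or_lt_of_le hm with rfl | hm'
  · simp
  have hcont : Continuous fun t : ℝ => 2 * s * Real.exp (2 * s * t) := by continuity
  have hint : IntegrableOn (fun t : ℝ => 2 * s * Real.exp (2 * s * t)) (Ioo 0 m) :=
    (hcont.integrableOn_Icc (a := 0) (b := m)).mono_set Ioo_subset_Icc_self
  rw [← ofReal_integral_eq_lintegral_ofReal hint
      (Filter.Eventually.of_forall fun t => by positivity)]
  congr 1
  have h1 : ∫ t in Ioo (0:ℝ) m, 2 * s * Real.exp (2 * s * t)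
      = ∫ t in (0:ℝ)..m, 2 * s * Real.exp (2 * s * t) := by
    rw [intervalIntegral.integral_of_le hm, integral_Ioc_eq_integral_Ioo]
  have hderiv : ∀ t ∈ uIcc (0:ℝ) m,
      HasDerivAt (fun u : ℝ => Real.exp (2 * s * u)) (2 * s * Real.exp (2 * s * t)) t := by
    intro t _
    have h : HasDerivAt (fun u : ℝ => Real.exp (2 * s * u)) (Real.exp (2 * s * t) * (2 * s * 1)) t :=
      (Real.hasDerivAt_exp (2 * s * t)).comp t ((hasDerivAt_id t).const_mul (2 * s))
    convert h using 1
    ring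
  rw [h1, intervalIntegral.integral_eq_sub_of_hasDerivAt hderiv (hcont.intervalIntegrable _ _)]
  norm_num

def bfun (s x : ℝ) : ℝ≥0∞ := ENNReal.ofReal (Real.exp (-(s * x)))

def phi (s t x : ℝ) : ℝ≥0∞ := if t < x then bfun s x else 0

def cfun (s t : ℝ) : ℝ≥0∞ := ENNReal.ofReal (2 * s * Real.exp (2 * s * t))

def Mfun (s : ℝ) (ρ : Measure ℝ) (t : ℝ) : ℝ≥0∞ := ∫⁻ x, phi s t x ∂ρ

def gk (s : ℝ) (ρ₁ ρ₂ : Measure ℝ) : ℝ≥0∞ :=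
  ∫⁻ x, ∫⁻ y, ENNReal.ofReal (Real.exp (-(s * |x - y|))) ∂ρ₂ ∂ρ₁

lemma meas_bfun (s : ℝ) : Measurable (bfun s) := by unfold bfun; fun_prop

lemma meas_phi (s : ℝ) : Measurable (fun p : ℝ × ℝ => phi s p.1 p.2) := by
  unfold phi
  exact Measurable.ite (measurableSet_lt measurable_fst measurable_snd)
    ((meas_bfun s).comp measurable_snd) measurable_const

lemma meas_phi_x (s t : ℝ) : Measurable (phi s t) :=
  (meas_phi s).comp (measurable_const.prodMk measurable_id)

lemma meas_cfun (s : ℝ) : Measurable (cfun s) := by unfold cfun; fun_prop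

lemma meas_Mfun (s : ℝ) (ρ : Measure ℝ) [SFinite ρ] : Measurable (Mfun s ρ) :=
  Measurable.lintegral_prod_right (f := fun t x => phi s t x) (meas_phi s)

lemma kernel_rep {s x y : ℝ} (hs : 0 < s) (hx : 0 ≤ x) (hy : 0 ≤ y) :
    ENNReal.ofReal (Real.exp (-(s * |x - y|))) =
      bfun s x * bfun s y + ∫⁻ t in Ioi 0, cfun s t * (phi s t x * phi s t y) := by
  set m := min x y with hm
  have hm0 : 0 ≤ m := le_min hx hy
  have habs : |x - y| = x + y - 2 * m := by
    rcases le_total x y with h | h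
    · rw [abs_of_nonpos (by linarith), hm, min_eq_left h]; ring
    · rw [abs_of_nonneg (by linarith), hm, min_eq_right h]; ring
  have hpoint : ∀ t, cfun s t * (phi s t x * phi s t y)
      = (Iio m).indicator (fun t => cfun s t * (bfun s x * bfun s y)) t := by
    intro t
    rcases lt_or_ge t m with h | h
    · have hx' : t < x := lt_of_lt_of_le h (min_le_left _ _)
      have hy' : t < y := lt_of_lt_of_le h (min_le_right _ _)
      rw [Set.indicator_of_mem (show t ∈ Iio m from h)]
      simp [phi, hx', hy']
    · have : ¬ (t < x) ∨ ¬ (t < y) := by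
        rcases le_total x y with h' | h'
        · left; rw [hm, min_eq_left h'] at h; exact not_lt.2 h
        · right; rw [hm, min_eq_right h'] at h; exact not_lt.2 h
      rw [Set.indicator_of_notMem (show t ∉ Iio m by simpa using h)]
      rcases this with h' | h' <;> simp [phi, h']
  have hInt : (∫⁻ t in Ioi 0, cfun s t * (phi s t x * phi s t y))
      = ENNReal.ofReal (Real.exp (2 * s * m) - 1) * (bfun s x * bfun s y) := by
    rw [lintegral_congr_ae (Filter.Eventually.of_forall hpoint),
      lintegral_indicator measurableSet_Iio _, Measure.restrict_restrict measurableSet_Iio]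
    have hset : Iio m ∩ Ioi 0 = Ioo 0 m := by
      ext t; simp [mem_Ioo, and_comm]
    rw [hset]
    simp only [cfun]
    rw [lintegral_mul_const' _ _ (ENNReal.mul_ne_top (by simp [bfun]) (by simp [bfun])),
      lint_exp_Ioo hs hm0]
  rw [hInt]
  have hexp : Real.exp (-(s * |x - y|))
      = Real.exp (-(s * x)) * Real.exp (-(s * y)) * Real.exp (2 * s * m) := by
    rw [← Real.exp_add, ← Real.exp_add]
    congr 1
    rw [habs]; ring
  have h1 : (1 : ℝ) ≤ Real.exp (2 * s * m) := by
    rw [← Real.exp_zero]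
    exact Real.exp_le_exp.2 (by positivity)
  have : ENNReal.ofReal (Real.exp (2 * s * m))
      = 1 + ENNReal.ofReal (Real.exp (2 * s * m) - 1) := by
    rw [← ENNReal.ofReal_one, ← ENNReal.ofReal_add (by norm_num) (by linarith)]
    norm_num
  rw [hexp, ENNReal.ofReal_mul (by positivity), ENNReal.ofReal_mul (by positivity)]
  show bfun s x * bfun s y * ENNReal.ofReal (Real.exp (2 * s * m)) = _
  rw [this, mul_add, mul_one]
  ring

lemma bfun_le_one {s x : ℝ} (hs : 0 < s) (hx : 0 ≤ x) : bfun s x ≤ 1 := by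
  unfold bfun
  rw [← ENNReal.ofReal_one]
  exact ENNReal.ofReal_le_ofReal
    (Real.exp_le_one_iff.2 (neg_nonpos.2 (mul_nonneg hs.le hx)))

lemma meas_phi_t (s x : ℝ) : Measurable (fun t => phi s t x) :=
  (meas_phi s).comp (measurable_id.prodMk measurable_const)

lemma gk_rep {s : ℝ} (hs : 0 < s) (ρ₁ ρ₂ : Measure ℝ)
    [IsProbabilityMeasure ρ₁] [IsProbabilityMeasure ρ₂]
    (h₁ : ∀ᵐ x ∂ρ₁, x ∈ Icc (0:ℝ) 1) (h₂ : ∀ᵐ x ∂ρ₂, x ∈ Icc (0:ℝ) 1) :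
    gk s ρ₁ ρ₂ = (∫⁻ x, bfun s x ∂ρ₁) * (∫⁻ x, bfun s x ∂ρ₂) +
      ∫⁻ t in Ioi 0, cfun s t * (Mfun s ρ₁ t * Mfun s ρ₂ t) := by
  have hB₂ : (∫⁻ x, bfun s x ∂ρ₂) ≠ ∞ := by
    refine ne_of_lt (lt_of_le_of_lt ?_ (by simp : (1:ℝ≥0∞) < ∞))
    calc ∫⁻ x, bfun s x ∂ρ₂ ≤ ∫⁻ _, 1 ∂ρ₂ :=
          lintegral_mono_ae (by filter_upwards [h₂] with x hx; exact bfun_le_one hs hx.1)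
      _ = 1 := by simp
  have inner : ∀ x : ℝ, 0 ≤ x →
      (∫⁻ y, ENNReal.ofReal (Real.exp (-(s * |x - y|))) ∂ρ₂)
        = bfun s x * (∫⁻ y, bfun s y ∂ρ₂)
          + ∫⁻ t in Ioi 0, (cfun s t * phi s t x) * Mfun s ρ₂ t := by
    intro x hx
    have e1 : (∫⁻ y, ENNReal.ofReal (Real.exp (-(s * |x - y|))) ∂ρ₂)
        = ∫⁻ y, (bfun s x * bfun s y
            + ∫⁻ t in Ioi 0, cfun s t * (phi s t x * phi s t y)) ∂ρ₂ :=
      lintegral_congr_ae (by filter_upwards [h₂] with y hy; exact kernel_rep hs hx hy.1)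
    rw [e1, lintegral_add_left ((meas_bfun s).const_mul (bfun s x))]
    congr 1
    · exact lintegral_const_mul _ (meas_bfun s)
    · have hswap : (∫⁻ y, (∫⁻ t in Ioi 0, cfun s t * (phi s t x * phi s t y)) ∂ρ₂)
          = ∫⁻ t in Ioi 0, ∫⁻ y, cfun s t * (phi s t x * phi s t y) ∂ρ₂ := by
        apply lintegral_lintegral_swap
        apply Measurable.aemeasurable
        have hphiy : Measurable fun p : ℝ × ℝ => phi s p.2 p.1 :=
          (meas_phi s).comp (measurable_snd.prodMk measurable_fst)
        exact ((meas_cfun s).comp measurable_snd).mul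
          (((meas_phi_t s x).comp measurable_snd).mul hphiy)
      rw [hswap]
      refine lintegral_congr fun t => ?_
      rw [show (fun y => cfun s t * (phi s t x * phi s t y))
          = fun y => (cfun s t * phi s t x) * phi s t y by funext y; ring,
        lintegral_const_mul _ (meas_phi_x s t)]
      rfl
  have e2 : gk s ρ₁ ρ₂ = ∫⁻ x, (bfun s x * (∫⁻ y, bfun s y ∂ρ₂)
      + ∫⁻ t in Ioi 0, (cfun s t * phi s t x) * Mfun s ρ₂ t) ∂ρ₁ :=
    lintegral_congr_ae (by filter_upwards [h₁] with x hx; exact inner x hx.1)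
  rw [e2, lintegral_add_left ((meas_bfun s).mul_const _)]
  congr 1
  · exact lintegral_mul_const' _ _ hB₂
  · have hswap : (∫⁻ x, (∫⁻ t in Ioi 0, (cfun s t * phi s t x) * Mfun s ρ₂ t) ∂ρ₁)
        = ∫⁻ t in Ioi 0, ∫⁻ x, (cfun s t * phi s t x) * Mfun s ρ₂ t ∂ρ₁ := by
      apply lintegral_lintegral_swap
      apply Measurable.aemeasurable
      have hphiy : Measurable fun p : ℝ × ℝ => phi s p.2 p.1 :=
        (meas_phi s).comp (measurable_snd.prodMk measurable_fst)
      exact (((meas_cfun s).comp measurable_snd).mul hphiy).mul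
        ((meas_Mfun s ρ₂).comp measurable_snd)
    rw [hswap]
    refine lintegral_congr fun t => ?_
    rw [show (fun x => (cfun s t * phi s t x) * Mfun s ρ₂ t)
        = fun x => (cfun s t * Mfun s ρ₂ t) * phi s t x by funext x; ring,
      lintegral_const_mul _ (meas_phi_x s t)]
    show cfun s t * Mfun s ρ₂ t * Mfun s ρ₁ t = _
    ring

lemma gk_pd {s : ℝ} (hs : 0 < s) (ν μ : Measure ℝ)
    [IsProbabilityMeasure ν] [IsProbabilityMeasure μ]
    (hν : ∀ᵐ x ∂ν, x ∈ Icc (0:ℝ) 1) (hμ : ∀ᵐ x ∂μ, x ∈ Icc (0:ℝ) 1) :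
    gk s ν μ + gk s ν μ ≤ gk s ν ν + gk s μ μ := by
  rw [gk_rep hs ν μ hν hμ, gk_rep hs ν ν hν hν, gk_rep hs μ μ hμ hμ]
  set Bν := ∫⁻ x, bfun s x ∂ν
  set Bμ := ∫⁻ x, bfun s x ∂μ
  set Iνμ := ∫⁻ t in Ioi 0, cfun s t * (Mfun s ν t * Mfun s μ t)
  set Iνν := ∫⁻ t in Ioi 0, cfun s t * (Mfun s ν t * Mfun s ν t)
  set Iμμ := ∫⁻ t in Ioi 0, cfun s t * (Mfun s μ t * Mfun s μ t)
  have h1 : Bν * Bμ + Bν * Bμ ≤ Bν * Bν + Bμ * Bμ := two_mul_le _ _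
  have hmeas : Measurable fun t => cfun s t * (Mfun s ν t * Mfun s μ t) :=
    (meas_cfun s).mul ((meas_Mfun s ν).mul (meas_Mfun s μ))
  have hmeasν : Measurable fun t => cfun s t * (Mfun s ν t * Mfun s ν t) :=
    (meas_cfun s).mul ((meas_Mfun s ν).mul (meas_Mfun s ν))
  have h2 : Iνμ + Iνμ ≤ Iνν + Iμμ := by
    rw [show Iνμ + Iνμ = ∫⁻ t in Ioi 0, (cfun s t * (Mfun s ν t * Mfun s μ t)
        + cfun s t * (Mfun s ν t * Mfun s μ t)) from (lintegral_add_left hmeas _).symm,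
      show Iνν + Iμμ = ∫⁻ t in Ioi 0, (cfun s t * (Mfun s ν t * Mfun s ν t)
        + cfun s t * (Mfun s μ t * Mfun s μ t)) from (lintegral_add_left hmeasν _).symm]
    refine lintegral_mono fun t => ?_
    calc cfun s t * (Mfun s ν t * Mfun s μ t) + cfun s t * (Mfun s ν t * Mfun s μ t)
        = cfun s t * (Mfun s ν t * Mfun s μ t + Mfun s ν t * Mfun s μ t) := (mul_add _ _ _).symm
      _ ≤ cfun s t * (Mfun s ν t * Mfun s ν t + Mfun s μ t * Mfun s μ t) :=
          mul_le_mul_right (two_mul_le _ _) _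
      _ = _ := mul_add _ _ _
  calc Bν * Bμ + Iνμ + (Bν * Bμ + Iνμ) = (Bν * Bμ + Bν * Bμ) + (Iνμ + Iνμ) := by ring
    _ ≤ (Bν * Bν + Bμ * Bμ) + (Iνν + Iμμ) := add_le_add h1 h2
    _ = Bν * Bν + Iνν + (Bμ * Bμ + Iμμ) := by ring

lemma gk_le_one {s : ℝ} (hs : 0 < s) (ρ₁ ρ₂ : Measure ℝ)
    [IsProbabilityMeasure ρ₁] [IsProbabilityMeasure ρ₂] : gk s ρ₁ ρ₂ ≤ 1 := by
  have hker : ∀ x y : ℝ, ENNReal.ofReal (Real.exp (-(s * |x - y|))) ≤ 1 := by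
    intro x y
    rw [← ENNReal.ofReal_one]
    exact ENNReal.ofReal_le_ofReal
      (Real.exp_le_one_iff.2 (neg_nonpos.2 (mul_nonneg hs.le (abs_nonneg _))))
  calc gk s ρ₁ ρ₂ ≤ ∫⁻ _, 1 ∂ρ₁ := lintegral_mono fun x =>
        le_trans (lintegral_mono fun y => hker x y) (by simp)
    _ = 1 := by simp

def Phi (γ s : ℝ) (ρ₁ ρ₂ : Measure ℝ) : ℝ≥0∞ :=
  ∫⁻ x, ∫⁻ y, ENNReal.ofReal ((1 - Real.exp (-(s * |x - y|))) * s ^ (-1 - γ)) ∂ρ₂ ∂ρ₁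

lemma Phi_eq (γ : ℝ) {s : ℝ} (hs : 0 < s) (ρ₁ ρ₂ : Measure ℝ)
    [IsProbabilityMeasure ρ₁] [IsProbabilityMeasure ρ₂] :
    Phi γ s ρ₁ ρ₂ = (1 - gk s ρ₁ ρ₂) * ENNReal.ofReal (s ^ (-1 - γ)) := by
  set W := ENNReal.ofReal (s ^ (-1 - γ)) with hW
  have hWt : W ≠ ∞ := ENNReal.ofReal_ne_top
  have hexp_le : ∀ x y : ℝ, Real.exp (-(s * |x - y|)) ≤ 1 := fun x y =>
    Real.exp_le_one_iff.2 (neg_nonpos.2 (mul_nonneg hs.le (abs_nonneg _)))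
  have hker_le : ∀ x y : ℝ, ENNReal.ofReal (Real.exp (-(s * |x - y|))) ≤ 1 := fun x y => by
    rw [← ENNReal.ofReal_one]
    exact ENNReal.ofReal_le_ofReal (hexp_le x y)
  have hmeasker : Measurable fun p : ℝ × ℝ =>
      ENNReal.ofReal (Real.exp (-(s * |p.1 - p.2|))) := by fun_prop
  have point : ∀ x y : ℝ, ENNReal.ofReal ((1 - Real.exp (-(s * |x - y|))) * s ^ (-1 - γ))
      = (1 - ENNReal.ofReal (Real.exp (-(s * |x - y|)))) * W := by
    intro x y
    rw [ENNReal.ofReal_mul (sub_nonneg.2 (hexp_le x y)),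
      ENNReal.ofReal_sub _ (Real.exp_nonneg _), ENNReal.ofReal_one]
  have hinner : ∀ x : ℝ,
      (∫⁻ y, ENNReal.ofReal ((1 - Real.exp (-(s * |x - y|))) * s ^ (-1 - γ)) ∂ρ₂)
      = (1 - ∫⁻ y, ENNReal.ofReal (Real.exp (-(s * |x - y|))) ∂ρ₂) * W := by
    intro x
    simp_rw [point x]
    rw [lintegral_mul_const' _ _ hWt]
    congr 1
    have hm : Measurable fun y => ENNReal.ofReal (Real.exp (-(s * |x - y|))) := by fun_prop
    rw [lintegral_sub' hm.aemeasurable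
      (ne_of_lt (lt_of_le_of_lt ((lintegral_mono fun y => hker_le x y).trans (by simp))
        (by norm_num : (1:ℝ≥0∞) < ∞)))
      (Filter.Eventually.of_forall fun y => hker_le x y)]
    simp
  have hK2meas : Measurable fun x => ∫⁻ y, ENNReal.ofReal (Real.exp (-(s * |x - y|))) ∂ρ₂ :=
    Measurable.lintegral_prod_right
      (f := fun x y => ENNReal.ofReal (Real.exp (-(s * |x - y|)))) hmeasker
  have hK2le : ∀ x : ℝ, (∫⁻ y, ENNReal.ofReal (Real.exp (-(s * |x - y|))) ∂ρ₂) ≤ 1 :=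
    fun x => (lintegral_mono fun y => hker_le x y).trans (by simp)
  calc Phi γ s ρ₁ ρ₂
      = ∫⁻ x, (1 - ∫⁻ y, ENNReal.ofReal (Real.exp (-(s * |x - y|))) ∂ρ₂) * W ∂ρ₁ :=
        lintegral_congr fun x => hinner x
    _ = (∫⁻ x, (1 - ∫⁻ y, ENNReal.ofReal (Real.exp (-(s * |x - y|))) ∂ρ₂) ∂ρ₁) * W :=
        lintegral_mul_const' _ _ hWt
    _ = (1 - gk s ρ₁ ρ₂) * W := by
        congr 1
        rw [lintegral_sub' hK2meas.aemeasurable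
          (ne_of_lt (lt_of_le_of_lt ((lintegral_mono hK2le).trans (by simp))
            (by norm_num : (1:ℝ≥0∞) < ∞)))
          (Filter.Eventually.of_forall hK2le)]
        simp [gk]

lemma Phi_pd (γ : ℝ) {s : ℝ} (hs : 0 < s) (ν μ : Measure ℝ)
    [IsProbabilityMeasure ν] [IsProbabilityMeasure μ]
    (hν : ∀ᵐ x ∂ν, x ∈ Icc (0:ℝ) 1) (hμ : ∀ᵐ x ∂μ, x ∈ Icc (0:ℝ) 1) :
    Phi γ s ν ν + Phi γ s μ μ ≤ Phi γ s ν μ + Phi γ s ν μ := by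
  rw [Phi_eq γ hs ν ν, Phi_eq γ hs μ μ, Phi_eq γ hs ν μ, ← add_mul, ← add_mul]
  refine mul_le_mul_left ?_ _
  have ha := gk_le_one hs ν ν
  have hb := gk_le_one hs μ μ
  have hc := gk_le_one hs ν μ
  have key := gk_pd hs ν μ hν hμ
  have hfin : gk s ν ν + gk s μ μ ≠ ∞ :=
    ne_of_lt (lt_of_le_of_lt (add_le_add ha hb) (by norm_num))
  rw [← ENNReal.add_le_add_iff_right hfin]
  calc (1 - gk s ν ν) + (1 - gk s μ μ) + (gk s ν ν + gk s μ μ)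
      = ((1 - gk s ν ν) + gk s ν ν) + ((1 - gk s μ μ) + gk s μ μ) :=
        add_add_add_comm _ _ _ _
    _ = 1 + 1 := by rw [tsub_add_cancel_of_le ha, tsub_add_cancel_of_le hb]
    _ = ((1 - gk s ν μ) + gk s ν μ) + ((1 - gk s ν μ) + gk s ν μ) := by
        rw [tsub_add_cancel_of_le hc]
    _ = (1 - gk s ν μ) + (1 - gk s ν μ) + (gk s ν μ + gk s ν μ) :=
        (add_add_add_comm _ _ _ _).symm
    _ ≤ (1 - gk s ν μ) + (1 - gk s ν μ) + (gk s ν ν + gk s μ μ) := add_le_add_right key _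

lemma integrableOn_sub {γ : ℝ} (hγ : 0 < γ) (hγ1 : γ < 1) {r : ℝ} (hr : 0 < r) :
    IntegrableOn (fun s : ℝ => (1 - Real.exp (-(s * r))) * s ^ (-1 - γ)) (Ioi 0) := by
  have hmeas : Measurable fun s : ℝ => (1 - Real.exp (-(s * r))) * s ^ (-1 - γ) := by fun_prop
  have hnn : ∀ s : ℝ, 0 < s → 0 ≤ (1 - Real.exp (-(s * r))) * s ^ (-1 - γ) := by
    intro s hs
    apply mul_nonneg
    · rw [sub_nonneg]
      exact Real.exp_le_one_iff.2 (neg_nonpos.2 (by positivity))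
    · positivity
  rw [← Ioc_union_Ioi_eq_Ioi (by norm_num : (0:ℝ) ≤ 1)]
  apply IntegrableOn.union
  · have hint1 : IntegrableOn (fun s : ℝ => r * s ^ (-γ)) (Ioc 0 1) := by
      have h := intervalIntegral.intervalIntegrable_rpow' (a := 0) (b := 1) (by linarith : (-1:ℝ) < -γ)
      rw [intervalIntegrable_iff_integrableOn_Ioc_of_le (by norm_num)] at h
      exact h.const_mul r
    refine Integrable.mono' hint1 hmeas.aestronglyMeasurable.restrict ?_
    rw [ae_restrict_iff' measurableSet_Ioc]
    refine Filter.Eventually.of_forall fun s hs => ?_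
    obtain ⟨hs0, hs1⟩ := hs
    rw [Real.norm_of_nonneg (hnn s hs0)]
    have h1 : 1 - Real.exp (-(s * r)) ≤ s * r := by
      have := Real.add_one_le_exp (-(s * r))
      linarith
    have h2 : (0:ℝ) < s ^ (-1 - γ) := Real.rpow_pos_of_pos hs0 _
    calc (1 - Real.exp (-(s * r))) * s ^ (-1 - γ) ≤ (s * r) * s ^ (-1 - γ) :=
          mul_le_mul_of_nonneg_right h1 h2.le
      _ = r * (s * s ^ (-1 - γ)) := by ring
      _ = r * s ^ (-γ) := by
          congr 1
          rw [show s * s ^ (-1 - γ) = s ^ (1 + (-1 - γ)) by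
            rw [Real.rpow_add hs0, Real.rpow_one]]
          congr 1
          ring
  · have hint2 : IntegrableOn (fun s : ℝ => s ^ (-1 - γ)) (Ioi 1) :=
      integrableOn_Ioi_rpow_of_lt (by linarith) one_pos
    refine Integrable.mono' hint2 hmeas.aestronglyMeasurable.restrict ?_
    rw [ae_restrict_iff' measurableSet_Ioi]
    refine Filter.Eventually.of_forall fun s hs => ?_
    have hs0 : (0:ℝ) < s := lt_trans one_pos hs
    rw [Real.norm_of_nonneg (hnn s hs0)]
    have h2 : (0:ℝ) ≤ s ^ (-1 - γ) := (Real.rpow_pos_of_pos hs0 _).le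
    have h1 : 1 - Real.exp (-(s * r)) ≤ 1 := by
      have := Real.exp_nonneg (-(s * r)); linarith
    calc (1 - Real.exp (-(s * r))) * s ^ (-1 - γ) ≤ 1 * s ^ (-1 - γ) :=
          mul_le_mul_of_nonneg_right h1 h2
      _ = s ^ (-1 - γ) := one_mul _

def Creal (γ : ℝ) : ℝ := ∫ s in Ioi (0:ℝ), (1 - Real.exp (-s)) * s ^ (-1 - γ)

def Cen (γ : ℝ) : ℝ≥0∞ :=
  ∫⁻ s in Ioi (0:ℝ), ENNReal.ofReal ((1 - Real.exp (-s)) * s ^ (-1 - γ))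

lemma ae_nonneg_sub (γ r : ℝ) (hr : 0 ≤ r) :
    0 ≤ᵐ[volume.restrict (Ioi 0)] fun s : ℝ => (1 - Real.exp (-(s * r))) * s ^ (-1 - γ) := by
  filter_upwards [self_mem_ae_restrict measurableSet_Ioi] with s hs
  have hs0 : (0:ℝ) < s := hs
  apply mul_nonneg
  · rw [sub_nonneg]
    exact Real.exp_le_one_iff.2 (neg_nonpos.2 (by positivity))
  · positivity

lemma Cen_eq {γ : ℝ} (hγ : 0 < γ) (hγ1 : γ < 1) : Cen γ = ENNReal.ofReal (Creal γ) := by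
  refine (ofReal_integral_eq_lintegral_ofReal ?_ ?_).symm
  · simpa [IntegrableOn] using integrableOn_sub hγ hγ1 one_pos
  · simpa using ae_nonneg_sub γ 1 zero_le_one

lemma Cen_ne_top {γ : ℝ} (hγ : 0 < γ) (hγ1 : γ < 1) : Cen γ ≠ ∞ := by
  rw [Cen_eq hγ hγ1]; exact ENNReal.ofReal_ne_top

lemma Cen_pos {γ : ℝ} (hγ : 0 < γ) (hγ1 : γ < 1) : 0 < Cen γ := by
  set ε : ℝ := (1 - Real.exp (-1)) * 2 ^ (-1 - γ) with hε
  have hexp1 : Real.exp (-1) < 1 := by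
    rw [← Real.exp_zero]
    exact Real.exp_lt_exp.2 (by norm_num)
  have hεpos : 0 < ε := by
    apply mul_pos (by linarith)
    positivity
  have hsub : ∀ u ∈ Icc (1:ℝ) 2, ENNReal.ofReal ε
      ≤ ENNReal.ofReal ((1 - Real.exp (-u)) * u ^ (-1 - γ)) := by
    intro u hu
    obtain ⟨h1, h2⟩ := hu
    apply ENNReal.ofReal_le_ofReal
    have e1 : Real.exp (-u) ≤ Real.exp (-1) := Real.exp_le_exp.2 (by linarith)
    have e2 : (2:ℝ) ^ (-1 - γ) ≤ u ^ (-1 - γ) := by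
      rw [show (-1 - γ) = -(1 + γ) by ring, Real.rpow_neg (by norm_num : (0:ℝ) ≤ 2),
        Real.rpow_neg (by linarith : (0:ℝ) ≤ u)]
      have hle : u ^ (1 + γ) ≤ (2:ℝ) ^ (1 + γ) :=
        Real.rpow_le_rpow (by linarith) h2 (by linarith)
      have hpos : (0:ℝ) < u ^ (1 + γ) := Real.rpow_pos_of_pos (by linarith) _
      exact inv_anti₀ hpos hle
    have h2pos : (0:ℝ) ≤ (2:ℝ) ^ (-1 - γ) := by positivity
    exact mul_le_mul (by linarith) e2 h2pos (by linarith)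
  have hvol : volume (Icc (1:ℝ) 2) = 1 := by
    rw [Real.volume_Icc]; norm_num
  have hlow : ENNReal.ofReal ε
      ≤ ∫⁻ s in Icc (1:ℝ) 2, ENNReal.ofReal ((1 - Real.exp (-s)) * s ^ (-1 - γ)) := by
    calc ENNReal.ofReal ε = ENNReal.ofReal ε * volume (Icc (1:ℝ) 2) := by rw [hvol, mul_one]
      _ = ∫⁻ _ in Icc (1:ℝ) 2, ENNReal.ofReal ε := (setLIntegral_const _ _).symm
      _ ≤ _ := setLIntegral_mono' measurableSet_Icc hsub
  have hsubset : (∫⁻ s in Icc (1:ℝ) 2, ENNReal.ofReal ((1 - Real.exp (-s)) * s ^ (-1 - γ)))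
      ≤ Cen γ :=
    lintegral_mono_set fun u hu => lt_of_lt_of_le one_pos hu.1
  exact lt_of_lt_of_le (ENNReal.ofReal_pos.2 hεpos) (hlow.trans hsubset)

lemma subord {γ : ℝ} (hγ : 0 < γ) (hγ1 : γ < 1) {r : ℝ} (hr : 0 ≤ r) :
    ENNReal.ofReal (r ^ γ) * Cen γ =
      ∫⁻ s in Ioi 0, ENNReal.ofReal ((1 - Real.exp (-(s * r))) * s ^ (-1 - γ)) := by
  rcases eq_or_lt_of_le hr with rfl | hr'
  · simp [Real.zero_rpow hγ.ne']
  have key : (∫ s in Ioi (0:ℝ), (1 - Real.exp (-(s * r))) * s ^ (-1 - γ))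
      = r ^ γ * Creal γ := by
    have comp := integral_comp_mul_left_Ioi
      (fun u => (1 - Real.exp (-u)) * u ^ (-1 - γ)) 0 hr'
    simp only [mul_zero, smul_eq_mul] at comp
    have e1 : (∫ s in Ioi (0:ℝ), (1 - Real.exp (-(r * s))) * (r * s) ^ (-1 - γ))
        = r ^ (-1 - γ) * ∫ s in Ioi (0:ℝ), (1 - Real.exp (-(s * r))) * s ^ (-1 - γ) := by
      rw [← integral_const_mul]
      refine setIntegral_congr_fun measurableSet_Ioi fun s hs => ?_
      have hs0 : (0:ℝ) < s := hs
      rw [Real.mul_rpow hr'.le hs0.le, mul_comm r s]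
      ring
    have e2 : r ^ (-1 - γ) * (∫ s in Ioi (0:ℝ), (1 - Real.exp (-(s * r))) * s ^ (-1 - γ))
        = r⁻¹ * Creal γ := by
      rw [← e1]
      exact comp
    have cancel : r ^ (1 + γ) * r ^ (-1 - γ) = 1 := by
      rw [← Real.rpow_add hr']
      norm_num
    have hfin : (∫ s in Ioi (0:ℝ), (1 - Real.exp (-(s * r))) * s ^ (-1 - γ))
        = r ^ (1 + γ) * (r⁻¹ * Creal γ) := by
      rw [← e2, ← mul_assoc, cancel, one_mul]
    rw [hfin, ← Real.rpow_neg_one r, ← mul_assoc, ← Real.rpow_add hr']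
    norm_num
  rw [← ofReal_integral_eq_lintegral_ofReal (integrableOn_sub hγ hγ1 hr')
    (ae_nonneg_sub γ r hr), key, ENNReal.ofReal_mul (Real.rpow_nonneg hr γ),
    Cen_eq hγ hγ1]

def En (γ : ℝ) (ρ₁ ρ₂ : Measure ℝ) : ℝ≥0∞ :=
  ∫⁻ x, ∫⁻ y, ENNReal.ofReal (|x - y| ^ γ) ∂ρ₂ ∂ρ₁

lemma meas_Phi (γ : ℝ) (ρ₁ ρ₂ : Measure ℝ) [SFinite ρ₁] [SFinite ρ₂] :
    Measurable fun s => Phi γ s ρ₁ ρ₂ := by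
  unfold Phi
  have hin : Measurable fun p : ℝ × ℝ =>
      ∫⁻ y, ENNReal.ofReal ((1 - Real.exp (-(p.1 * |p.2 - y|))) * p.1 ^ (-1 - γ)) ∂ρ₂ := by
    apply Measurable.lintegral_prod_right
      (f := fun (p : ℝ × ℝ) y =>
        ENNReal.ofReal ((1 - Real.exp (-(p.1 * |p.2 - y|))) * p.1 ^ (-1 - γ)))
    fun_prop
  exact Measurable.lintegral_prod_right
    (f := fun s x => ∫⁻ y, ENNReal.ofReal ((1 - Real.exp (-(s * |x - y|))) * s ^ (-1 - γ)) ∂ρ₂)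
    hin

lemma En_mul_Cen {γ : ℝ} (hγ : 0 < γ) (hγ1 : γ < 1) (ρ₁ ρ₂ : Measure ℝ)
    [IsProbabilityMeasure ρ₁] [IsProbabilityMeasure ρ₂] :
    En γ ρ₁ ρ₂ * Cen γ = ∫⁻ s in Ioi 0, Phi γ s ρ₁ ρ₂ := by
  have hCt : Cen γ ≠ ∞ := Cen_ne_top hγ hγ1
  calc En γ ρ₁ ρ₂ * Cen γ
      = ∫⁻ x, ((∫⁻ y, ENNReal.ofReal (|x - y| ^ γ) ∂ρ₂) * Cen γ) ∂ρ₁ :=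
        (lintegral_mul_const' _ _ hCt).symm
    _ = ∫⁻ x, (∫⁻ y, ENNReal.ofReal (|x - y| ^ γ) * Cen γ ∂ρ₂) ∂ρ₁ :=
        lintegral_congr fun x => (lintegral_mul_const' _ _ hCt).symm
    _ = ∫⁻ x, (∫⁻ y,
          (∫⁻ s in Ioi 0, ENNReal.ofReal ((1 - Real.exp (-(s * |x - y|))) * s ^ (-1 - γ)))
            ∂ρ₂) ∂ρ₁ :=
        lintegral_congr fun x => lintegral_congr fun y => subord hγ hγ1 (abs_nonneg _)
    _ = ∫⁻ x, (∫⁻ s in Ioi 0,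
          ∫⁻ y, ENNReal.ofReal ((1 - Real.exp (-(s * |x - y|))) * s ^ (-1 - γ)) ∂ρ₂) ∂ρ₁ := by
        refine lintegral_congr fun x => ?_
        refine lintegral_lintegral_swap ?_
        apply Measurable.aemeasurable
        fun_prop
    _ = ∫⁻ s in Ioi 0, Phi γ s ρ₁ ρ₂ := by
        refine lintegral_lintegral_swap ?_
        apply Measurable.aemeasurable
        apply Measurable.lintegral_prod_right
          (f := fun (p : ℝ × ℝ) y =>
            ENNReal.ofReal ((1 - Real.exp (-(p.2 * |p.1 - y|))) * p.2 ^ (-1 - γ)))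
        fun_prop

end

end Stmt16Aux

/-- Let `0 < γ < 1` and let `μ` be a Borel probability measure on
`[0,1]` such that `c ↦ ∫ |x-c|^γ dμ(x)` is constant on `[0,1]`.  Then `μ` maximizes
`∫∫ |x-x'|^γ dν dν` over all Borel probability measures `ν` on `[0,1]`. -/
theorem stmt16 (γ : ℝ) (hγ : 0 < γ) (hγ1 : γ < 1)
    (μ : Measure ℝ) [IsProbabilityMeasure μ] (hsupp : μ (Set.Icc (0 : ℝ) 1)ᶜ = 0)
    (hconst : ∃ K : ℝ, ∀ c ∈ Set.Icc (0 : ℝ) 1, (∫ x, |x - c| ^ γ ∂μ) = K) :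
    ∀ ν : Measure ℝ, IsProbabilityMeasure ν → ν (Set.Icc (0 : ℝ) 1)ᶜ = 0 →
      (∫ x, ∫ y, |x - y| ^ γ ∂ν ∂ν) ≤ ∫ x, ∫ y, |x - y| ^ γ ∂μ ∂μ := by
  classical
  obtain ⟨K, hK⟩ := hconst
  intro ν hνP hνsupp
  have hμae : ∀ᵐ x ∂μ, x ∈ Icc (0:ℝ) 1 := mem_ae_iff.2 hsupp
  have hνae : ∀ᵐ x ∂ν, x ∈ Icc (0:ℝ) 1 := mem_ae_iff.2 hνsupp
  have EnK : ∀ ρ : Measure ℝ, IsProbabilityMeasure ρ → (∀ᵐ x ∂ρ, x ∈ Icc (0:ℝ) 1) →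
      Stmt16Aux.En γ ρ μ = ENNReal.ofReal K := by
    intro ρ hρ hρae
    have hconst' : ∀ x ∈ Icc (0:ℝ) 1,
        (∫⁻ y, ENNReal.ofReal (|x - y| ^ γ) ∂μ) = ENNReal.ofReal K := by
      intro x hx
      have hInt : Integrable (fun y => |x - y| ^ γ) μ := by
        refine Integrable.mono' (integrable_const 1) ?_ ?_
        · exact (by fun_prop : Measurable fun y : ℝ => |x - y| ^ γ).aestronglyMeasurable
        · filter_upwards [hμae] with y hy
          rw [Real.norm_of_nonneg (Real.rpow_nonneg (abs_nonneg _) _)]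
          refine Real.rpow_le_one (abs_nonneg _) ?_ hγ.le
          rw [abs_le]
          obtain ⟨a1, a2⟩ := hx
          obtain ⟨b1, b2⟩ := hy
          constructor <;> linarith
      rw [← ofReal_integral_eq_lintegral_ofReal hInt
        (Filter.Eventually.of_forall fun y => Real.rpow_nonneg (abs_nonneg _) _)]
      congr 1
      rw [show (fun y => |x - y| ^ γ) = fun y => |y - x| ^ γ by
        funext y; rw [abs_sub_comm]]
      exact hK x hx
    unfold Stmt16Aux.En
    rw [lintegral_congr_ae (g := fun _ => ENNReal.ofReal K)
      (by filter_upwards [hρae] with x hx; exact hconst' x hx)]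
    simp
  haveI := hνP
  have pd : Stmt16Aux.En γ ν ν + Stmt16Aux.En γ μ μ
      ≤ Stmt16Aux.En γ ν μ + Stmt16Aux.En γ ν μ := by
    refine (ENNReal.mul_le_mul_iff_left (c := Stmt16Aux.Cen γ)
      (Stmt16Aux.Cen_pos hγ hγ1).ne' (Stmt16Aux.Cen_ne_top hγ hγ1)).1 ?_
    rw [add_mul, add_mul, Stmt16Aux.En_mul_Cen hγ hγ1 ν ν, Stmt16Aux.En_mul_Cen hγ hγ1 μ μ,
      Stmt16Aux.En_mul_Cen hγ hγ1 ν μ,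
      ← lintegral_add_left (Stmt16Aux.meas_Phi γ ν ν),
      ← lintegral_add_left (Stmt16Aux.meas_Phi γ ν μ)]
    refine lintegral_mono_ae ?_
    filter_upwards [self_mem_ae_restrict measurableSet_Ioi] with s hs
    exact Stmt16Aux.Phi_pd γ hs ν μ hνae hμae
  have hEνμ : Stmt16Aux.En γ ν μ = ENNReal.ofReal K := EnK ν hνP hνae
  have hEμμ : Stmt16Aux.En γ μ μ = ENNReal.ofReal K := EnK μ inferInstance hμae
  have hmain : Stmt16Aux.En γ ν ν ≤ Stmt16Aux.En γ μ μ := by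
    rw [hEμμ]
    rw [hEνμ, hEμμ] at pd
    exact (ENNReal.add_le_add_iff_right ENNReal.ofReal_ne_top).1 pd
  have conv : ∀ ρ : Measure ℝ, IsProbabilityMeasure ρ → (∀ᵐ x ∂ρ, x ∈ Icc (0:ℝ) 1) →
      (∫ x, ∫ y, |x - y| ^ γ ∂ρ ∂ρ) = (Stmt16Aux.En γ ρ ρ).toReal := by
    intro ρ hρ hρae
    haveI := hρ
    have hmeas2 : Measurable fun p : ℝ × ℝ => ENNReal.ofReal (|p.1 - p.2| ^ γ) := by fun_prop
    have h1 : ∀ x : ℝ, (∫ y, |x - y| ^ γ ∂ρ)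
        = (∫⁻ y, ENNReal.ofReal (|x - y| ^ γ) ∂ρ).toReal := by
      intro x
      rw [integral_eq_lintegral_of_nonneg_ae
        (Filter.Eventually.of_forall fun y => Real.rpow_nonneg (abs_nonneg _) _)
        (by fun_prop : Measurable fun y : ℝ => |x - y| ^ γ).aestronglyMeasurable]
    have hinle : ∀ᵐ x ∂ρ, (∫⁻ y, ENNReal.ofReal (|x - y| ^ γ) ∂ρ) ≤ 1 := by
      filter_upwards [hρae] with x hx
      calc (∫⁻ y, ENNReal.ofReal (|x - y| ^ γ) ∂ρ) ≤ ∫⁻ _, 1 ∂ρ := by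
            refine lintegral_mono_ae ?_
            filter_upwards [hρae] with y hy
            rw [← ENNReal.ofReal_one]
            apply ENNReal.ofReal_le_ofReal
            refine Real.rpow_le_one (abs_nonneg _) ?_ hγ.le
            rw [abs_le]
            obtain ⟨a1, a2⟩ := hx
            obtain ⟨b1, b2⟩ := hy
            constructor <;> linarith
        _ = 1 := by simp
    have hinmeas : Measurable fun x => ∫⁻ y, ENNReal.ofReal (|x - y| ^ γ) ∂ρ :=
      Measurable.lintegral_prod_right (f := fun x y => ENNReal.ofReal (|x - y| ^ γ)) hmeas2
    simp_rw [h1]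
    rw [integral_eq_lintegral_of_nonneg_ae
      (Filter.Eventually.of_forall fun x => ENNReal.toReal_nonneg)
      hinmeas.ennreal_toReal.aestronglyMeasurable]
    congr 1
    unfold Stmt16Aux.En
    refine lintegral_congr_ae ?_
    filter_upwards [hinle] with x hx
    exact ENNReal.ofReal_toReal (ne_of_lt (lt_of_le_of_lt hx (by norm_num)))
  rw [conv ν hνP hνae, conv μ inferInstance hμae]
  exact ENNReal.toReal_mono (by rw [hEμμ]; exact ENNReal.ofReal_ne_top) hmain
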